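/- Let n ≥ 2 be an integer, let f be a continuous, not identically zero, positive definite function on ℝ, and let g₁, g₂ be continuous, not identically zero, positive definite functions on ℝ with g₁(x)^n = f(x) and g₂(x)^n = f(x) for all x ∈ ℝ. Then g₁(x) = g₂(x) for every x in the connected component of S_f that contains 0. -/

import Mathlib

open Complex MeasureTheory Set Pointwise ComplexOrder

noncomputable section

/-- `f : ℝ → ℂ` is positive definite. -/
def IsPosDefFn (f : ℝ → ℂ) : Prop :=
  ∀ (m : ℕ) (x : Fin m → ℝ) (c : Fin m → ℂ),
    0 ≤ ∑ j, ∑ k, f (x j - x k) * c j * (starRingEnd ℂ) (c k)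

/-- `f ∈ PD(ℝ)`: continuous, not identically zero, positive definite. -/
def MemPD (f : ℝ → ℂ) : Prop :=
  Continuous f ∧ (∃ x, f x ≠ 0) ∧ IsPosDefFn f

/-- The essential support `S_f`. -/
def essSupp (f : ℝ → ℂ) : Set ℝ := {x | f x ≠ 0}

/-- `D_n(f) = {g ∈ PD(ℝ) : g^n = f}`. -/
def Dset (n : ℕ) (f : ℝ → ℂ) : Set (ℝ → ℂ) :=
  {g | MemPD g ∧ ∀ x, g x ^ n = f x}

/-- The set of connected components of `S ⊆ ℝ`. -/
def comps (S : Set ℝ) : Set (Set ℝ) :=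
  {C | ∃ x ∈ S, C = connectedComponentIn S x}

/-- The basic 2×2 positivity inequality. -/
lemma pd_key {f : ℝ → ℂ} (hpd : IsPosDefFn f) (t : ℝ) (c : ℂ) :
    0 ≤ f 0 + f t * (starRingEnd ℂ) c + f (-t) * c + f 0 * (c * (starRingEnd ℂ) c) := by
  have h := hpd 2 ![t, 0] ![1, c]
  simpa [Fin.sum_univ_two, sub_self, mul_comm, mul_assoc, mul_left_comm, add_assoc,
    zero_sub] using h

lemma pd_zero_nonneg {f : ℝ → ℂ} (hpd : IsPosDefFn f) : 0 ≤ f 0 := by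
  have h := pd_key hpd 0 0
  simpa using h

lemma pd_conj_symm {f : ℝ → ℂ} (hpd : IsPosDefFn f) (t : ℝ) :
    f (-t) = (starRingEnd ℂ) (f t) := by
  have h0 : (f 0).im = 0 := (Complex.le_def.mp (pd_zero_nonneg hpd)).2.symm
  have h1 := (Complex.le_def.mp (pd_key hpd t 1)).2.symm
  have hI := (Complex.le_def.mp (pd_key hpd t Complex.I)).2.symm
  simp only [Complex.add_im, Complex.mul_im, map_one, Complex.one_re, Complex.one_im,
    Complex.conj_I, Complex.mul_re, Complex.I_re, Complex.I_im, Complex.neg_im, Complex.neg_re,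
    Complex.zero_im] at h1 hI
  apply Complex.ext
  · simp only [Complex.conj_re]; nlinarith [h1, hI, h0]
  · simp only [Complex.conj_im]; nlinarith [h1, hI, h0]

lemma pd_zero_ne_zero {f : ℝ → ℂ} (hc : MemPD f) : f 0 ≠ 0 := by
  intro h0
  obtain ⟨t, ht⟩ := hc.2.1
  apply ht
  have h := pd_key hc.2.2 t (-(f t))
  rw [h0, pd_conj_symm hc.2.2 t] at h
  simp only [zero_add, zero_mul, add_zero, map_neg, mul_neg] at h
  have hre := (Complex.le_def.mp h).1
  have him := (Complex.le_def.mp h).2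
  have : (f t).re ^ 2 + (f t).im ^ 2 ≤ 0 := by
    simp only [Complex.add_re, Complex.neg_re, Complex.mul_re, Complex.conj_re,
      Complex.conj_im, Complex.zero_re] at hre
    nlinarith [hre]
  have h1 : (f t).re = 0 := by nlinarith [sq_nonneg (f t).re, sq_nonneg (f t).im]
  have h2 : (f t).im = 0 := by nlinarith [sq_nonneg (f t).re, sq_nonneg (f t).im]
  exact Complex.ext h1 h2

theorem roots_agree_on_component_of_zero (n : ℕ) (hn : 2 ≤ n)
    (f g₁ g₂ : ℝ → ℂ) (hf : MemPD f) (hg₁ : MemPD g₁) (hg₂ : MemPD g₂)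
    (h₁ : ∀ x, g₁ x ^ n = f x) (h₂ : ∀ x, g₂ x ^ n = f x) :
    ∀ x ∈ connectedComponentIn (essSupp f) 0, g₁ x = g₂ x := by
  have hn0 : n ≠ 0 := by omega
  have hf0 : f 0 ≠ 0 := pd_zero_ne_zero hf
  set C := connectedComponentIn (essSupp f) 0 with hC
  have hCsub : C ⊆ essSupp f := connectedComponentIn_subset _ _
  have h0C : (0 : ℝ) ∈ C := mem_connectedComponentIn hf0
  have hCpre : IsPreconnected C := isPreconnected_connectedComponentIn
  have hg₂ne : ∀ y ∈ C, g₂ y ≠ 0 := by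
    intro y hy hz
    exact hCsub hy (by rw [← h₂ y, hz, zero_pow hn0])
  -- the quotient h = g₁ / g₂ maps C into the n-th roots of unity
  have hmaps : MapsTo (fun y => g₁ y / g₂ y) C {z : ℂ | z ^ n = 1} := by
    intro y hy
    simp only [mem_setOf_eq, div_pow, h₁, h₂]
    exact div_self (hCsub hy)
  have hcont : ContinuousOn (fun y => g₁ y / g₂ y) C :=
    hg₁.1.continuousOn.div hg₂.1.continuousOn hg₂ne
  -- the set of n-th roots of unity is finite, hence discrete
  have hfin : ({z : ℂ | z ^ n = 1} : Set ℂ).Finite := by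
    apply Set.Finite.subset (Polynomial.nthRoots n (1 : ℂ)).toFinset.finite_toSet
    intro z hz
    have : z ^ n = 1 := hz
    simp only [Finset.mem_coe, Multiset.mem_toFinset,
      Polynomial.mem_nthRoots (by omega : 0 < n)]
    exact this
  haveI : Finite ↥({z : ℂ | z ^ n = 1} : Set ℂ) := hfin.to_subtype
  haveI : DiscreteTopology ↥({z : ℂ | z ^ n = 1} : Set ℂ) := Finite.instDiscreteTopology
  -- g₁ 0 = g₂ 0 since both are nonnegative reals with the same n-th power
  have key0 : ∀ g : ℝ → ℂ, MemPD g → g 0 = ((g 0).re : ℂ) ∧ 0 ≤ (g 0).re := by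
    intro g hg
    obtain ⟨hre, him⟩ := Complex.le_def.mp (pd_zero_nonneg hg.2.2)
    refine ⟨?_, by simpa using hre⟩
    apply Complex.ext <;> simp [← him]
  have hg10 : g₁ 0 = ((g₁ 0).re : ℂ) := (key0 g₁ hg₁).1
  have hg20 : g₂ 0 = ((g₂ 0).re : ℂ) := (key0 g₂ hg₂).1
  have heq0 : g₁ 0 = g₂ 0 := by
    have hpow : ((g₁ 0).re : ℂ) ^ n = ((g₂ 0).re : ℂ) ^ n := by
      rw [← hg10, ← hg20, h₁, h₂]
    have hpowR : (g₁ 0).re ^ n = (g₂ 0).re ^ n := by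
      exact_mod_cast hpow
    have := (pow_left_inj₀ (key0 g₁ hg₁).2 (key0 g₂ hg₂).2 hn0).mp hpowR
    rw [hg10, hg20, this]
  intro x hx
  have hconst := hCpre.constant_of_mapsTo (isDiscrete_iff_discreteTopology.mpr this) hcont hmaps hx h0C
  have h0one : g₁ 0 / g₂ 0 = 1 := by
    rw [heq0]
    exact div_self (hg₂ne 0 h0C)
  have hdiv : g₁ x / g₂ x = 1 := by rw [hconst]; exact h0one
  rwa [div_eq_one_iff_eq (hg₂ne x hx)] at hdiv
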